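/- Let A be a one-generator left brace and x ∈ A such that A = A(x). Then λ_x(x) = x if and only if A is a trivial left brace whose additive group (A,+) is generated by x. -/

import Mathlib

/-- A left brace structure on a type carrying an abelian additive group structure `+`
and a (multiplicative) group structure `∘` (written `*`). -/
class LeftBrace (A : Type*) [AddCommGroup A] [Group A] : Prop where
  compat : ∀ a b c : A, a * (b + c) + a = a * b + a * c

section Brace

variable {A : Type*} [AddCommGroup A] [Group A]

/-- The map `λ_a : b ↦ -a + a ∘ b`, as a permutation of `A`. -/
def lam (a : A) : Equiv.Perm A where
  toFun b := -a + a * b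
  invFun b := a⁻¹ * (a + b)
  left_inv b := by simp
  right_inv b := by simp

/-- A subset of a left brace is a sub-left-brace if it is simultaneously (the carrier of)
a subgroup of `(A,+)` and a subgroup of `(A,∘)`. -/
def IsSubBrace (B : Set A) : Prop :=
  ∃ (Sa : AddSubgroup A) (Sm : Subgroup A), (Sa : Set A) = B ∧ (Sm : Set A) = B

/-- `A(x)`: the smallest sub-left-brace containing `x`. -/
def braceClosure (x : A) : Set A := ⋂₀ {B : Set A | IsSubBrace B ∧ x ∈ B}

end Brace

/-- The socle series of a left brace: `Soc_0 = {0}`,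
`Soc_{n+1} = {a | ∀ b, a + b - a∘b ∈ Soc_n}`. -/
def socSeq (A : Type*) [AddCommGroup A] [Group A] : ℕ → Set A
  | 0 => {0}
  | n + 1 => {a | ∀ b, a + b - a * b ∈ socSeq A n}

/-- A left brace has multipermutation level `n` if `n` is minimal with `Soc_n(A) = A`. -/
def BraceMPL (A : Type*) [AddCommGroup A] [Group A] (n : ℕ) : Prop :=
  socSeq A n = Set.univ ∧ ∀ m < n, socSeq A m ≠ Set.univ

/-- If `A = A(x)` is a one-generator left brace, then `λ_x(x) = x`
iff `A` is a trivial left brace whose additive group is generated by `x`. -/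
theorem stmt16 {A : Type} [AddCommGroup A] [Group A] [LeftBrace A]
    (x : A) (hx : braceClosure x = Set.univ) :
    lam x x = x ↔
      ((∀ a b : A, a * b = a + b) ∧ AddSubgroup.closure ({x} : Set A) = ⊤) := by
  have lamx : lam x x = -x + x * x := rfl
  have mul_add' : ∀ a b c : A, a * (b + c) = a * b + a * c - a := by
    intro a b c
    exact eq_sub_of_add_eq (LeftBrace.compat a b c)
  have mul_zero' : ∀ a : A, a * 0 = a := by
    intro a
    have h := LeftBrace.compat a 0 0
    rw [add_zero] at h
    exact (add_left_cancel (a := a * 0) (by rw [← h])).symm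
  have mul_neg' : ∀ a b : A, a * (-b) = a + a - a * b := by
    intro a b
    have h := mul_add' a b (-b)
    rw [add_neg_cancel, mul_zero'] at h
    have h2 : a * b + a * -b = a + a := sub_eq_iff_eq_add.mp h.symm
    exact eq_sub_of_add_eq' h2
  constructor
  · intro hl
    have hxx : x * x = x + x := by
      have h' : -x + x * x = x := hl
      calc x * x = x + (-x + x * x) := by abel
        _ = x + x := by rw [h']
    -- λ_x fixes all n • x
    have h1 : ∀ n : ℤ, x * (n • x) = x + n • x := by
      intro n
      induction n using Int.induction_on with
      | zero => simpa using mul_zero' x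
      | succ k ih =>
        have : ((k : ℤ) + 1) • x = (k : ℤ) • x + x := by
          rw [add_smul, one_smul]
        rw [this, mul_add', ih, hxx]; abel
      | pred k ih =>
        have : (-(k : ℤ) - 1) • x = (-(k : ℤ)) • x + (-x) := by
          rw [sub_smul, one_smul]; abel
        rw [this, mul_add', ih, mul_neg', hxx]; abel
    have hinv : x⁻¹ = -x := by
      have : x * (-x) = 1 := by
        rw [mul_neg', hxx]
        have h0 : (0 : A) = 1 := by
          have := mul_zero' 1
          rw [one_mul] at this
          exact this
        rw [← h0]; abel
      exact inv_eq_of_mul_eq_one_right this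
    have hinvx : x⁻¹ * x = 1 := inv_mul_cancel x
    have h0 : (1 : A) = 0 := by
      have := mul_zero' 1; rw [one_mul] at this; exact this.symm
    -- λ_{x⁻¹} fixes all n • x
    have h2 : ∀ n : ℤ, x⁻¹ * (n • x) = -x + n • x := by
      intro n
      induction n using Int.induction_on with
      | zero => simp [mul_zero', hinv]
      | succ k ih =>
        have : ((k : ℤ) + 1) • x = (k : ℤ) • x + x := by
          rw [add_smul, one_smul]
        rw [this, mul_add', ih, hinvx, h0, hinv]; abel
      | pred k ih =>
        have : (-(k : ℤ) - 1) • x = (-(k : ℤ)) • x + (-x) := by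
          rw [sub_smul, one_smul]; abel
        rw [this, mul_add', ih, mul_neg', hinvx, h0, hinv]; abel
    -- zpow agrees with zsmul
    have h3 : ∀ n : ℤ, x ^ n = n • x := by
      intro n
      induction n using Int.induction_on with
      | zero => rw [zpow_zero, zero_smul, h0]
      | succ k ih =>
        rw [show ((k : ℤ) + 1) = 1 + k by ring, zpow_add, zpow_one, ih, h1,
          add_smul, one_smul]
      | pred k ih =>
        rw [show (-(k : ℤ) - 1) = -1 + -(k : ℤ) by ring, zpow_add, zpow_neg_one,
          ih, h2, show (-1 : ℤ) + -(k : ℤ) = -(k : ℤ) - 1 by ring, sub_smul, one_smul]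
        abel
    -- the additive closure of x is a sub-brace
    have hcar : (Subgroup.closure ({x} : Set A) : Set A)
        = (AddSubgroup.closure ({x} : Set A) : Set A) := by
      ext a
      simp only [SetLike.mem_coe, Subgroup.mem_closure_singleton,
        AddSubgroup.mem_closure_singleton]
      constructor
      · rintro ⟨n, rfl⟩; exact ⟨n, (h3 n).symm⟩
      · rintro ⟨n, rfl⟩; exact ⟨n, h3 n⟩
    have hsub : IsSubBrace ((AddSubgroup.closure ({x} : Set A) : Set A)) :=
      ⟨AddSubgroup.closure {x}, Subgroup.closure {x}, rfl, hcar⟩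
    have hmem : x ∈ AddSubgroup.closure ({x} : Set A) :=
      AddSubgroup.subset_closure rfl
    have htop : (AddSubgroup.closure ({x} : Set A) : Set A) = Set.univ := by
      apply Set.eq_univ_of_univ_subset
      rw [← hx]
      exact Set.sInter_subset_of_mem ⟨hsub, hmem⟩
    have htop' : AddSubgroup.closure ({x} : Set A) = ⊤ :=
      (AddSubgroup.eq_top_iff' _).mpr (fun a => Set.eq_univ_iff_forall.mp htop a)
    refine ⟨?_, htop'⟩
    intro a b
    have ha : ∃ n : ℤ, n • x = a := by
      rw [← AddSubgroup.mem_closure_singleton, htop']; trivial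
    have hb : ∃ n : ℤ, n • x = b := by
      rw [← AddSubgroup.mem_closure_singleton, htop']; trivial
    obtain ⟨n, rfl⟩ := ha
    obtain ⟨m, rfl⟩ := hb
    calc n • x * m • x = x ^ (n + m) := by rw [← h3 n, ← h3 m, ← zpow_add]
      _ = n • x + m • x := by rw [h3, add_smul]
  · rintro ⟨htriv, -⟩
    have : lam x x = -x + x * x := rfl
    rw [this, htriv]; abel
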